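/- Let Z be an integrable real random variable. For x ≥ 0 define ψ⁺ₓ(y) := min{x, max{y, 0}} and E(x) := E[ψ⁺ₓ(x + Z)]. Then for all 0 ≤ x ≤ y, E(y) − E(x) = E[(y + Z) · 1_{−y < Z ≤ −x}] + (y − x) · P[Z > −x]. -/

import Mathlib

open MeasureTheory ProbabilityTheory

/-- **Increment identity (DerEq1)** in the proof of Lemma `LemVarDen`:
for an integrable random variable `Z`, with `ψ⁺ₓ(w) = min{x, max{w,0}}` and
`E(x) = E[ψ⁺ₓ(x+Z)]`, for all `0 ≤ x ≤ y`,
`E(y) − E(x) = E[(y+Z) 1_{−y < Z ≤ −x}] + (y−x) P[Z > −x]`. -/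
theorem increment_identity_DerEq1
    {Ω : Type*} [MeasurableSpace Ω] (P : Measure Ω) [IsProbabilityMeasure P]
    (Z : Ω → ℝ) (hZm : Measurable Z) (hZ : Integrable Z P) :
    ∀ x y : ℝ, 0 ≤ x → x ≤ y →
      (∫ ω, min y (max (y + Z ω) 0) ∂P) - (∫ ω, min x (max (x + Z ω) 0) ∂P) =
        (∫ ω, (if -y < Z ω ∧ Z ω ≤ -x then y + Z ω else 0) ∂P) +
          (y - x) * (P {ω | -x < Z ω}).toReal := by
  intro x y hx hxy
  have hy : (0:ℝ) ≤ y := hx.trans hxy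
  set S : Set Ω := {ω | -x < Z ω} with hS
  have hSm : MeasurableSet S := measurableSet_lt measurable_const hZm
  have haux : ∀ c : ℝ, 0 ≤ c → Integrable (fun ω => min c (max (c + Z ω) 0)) P := by
    intro c hc
    apply (integrable_const c).mono'
    · exact (measurable_const.min ((measurable_const.add hZm).max
        measurable_const)).aestronglyMeasurable
    · filter_upwards with ω
      rw [Real.norm_eq_abs, abs_le]
      refine ⟨le_trans (neg_nonpos.2 hc) (le_min hc (le_max_right _ _)), min_le_left _ _⟩
  have hint1 := haux y hy
  have hint2 := haux x hx
  have hintInd : Integrable (fun ω => (if -y < Z ω ∧ Z ω ≤ -x then y + Z ω else 0)) P := by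
    apply (integrable_const y).mono'
    · have hmeas : MeasurableSet {ω | -y < Z ω ∧ Z ω ≤ -x} :=
        (measurableSet_lt measurable_const hZm).inter (measurableSet_le hZm measurable_const)
      exact (Measurable.ite hmeas (measurable_const.add hZm)
        measurable_const).aestronglyMeasurable
    · filter_upwards with ω
      rw [Real.norm_eq_abs, abs_le]
      constructor <;> split_ifs with h <;> first | linarith [h.1, h.2] | linarith
  have hintS : Integrable (S.indicator fun _ => (y - x)) P := (integrable_const _).indicator hSm
  have key : ∀ ω, min y (max (y + Z ω) 0) - min x (max (x + Z ω) 0)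
      = (if -y < Z ω ∧ Z ω ≤ -x then y + Z ω else 0) + S.indicator (fun _ => y - x) ω := by
    intro ω
    simp only [Set.indicator_apply, hS, Set.mem_setOf_eq]
    rcases le_or_gt (Z ω) (-y) with h1 | h1
    · rw [max_eq_right (by linarith : y + Z ω ≤ 0),
        max_eq_right (by linarith : x + Z ω ≤ 0),
        min_eq_right hy, min_eq_right hx]
      rw [if_neg (by push_neg; intro h; linarith), if_neg (by linarith)]
      ring
    · rcases le_or_gt (Z ω) (-x) with h2 | h2
      · rw [max_eq_left (by linarith : 0 ≤ y + Z ω),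
          max_eq_right (by linarith : x + Z ω ≤ 0),
          min_eq_right (by linarith : y + Z ω ≤ y), min_eq_right hx,
          if_pos ⟨h1, h2⟩, if_neg (by linarith)]
        ring
      · rcases le_or_gt (Z ω) 0 with h3 | h3
        · rw [max_eq_left (by linarith : 0 ≤ y + Z ω),
            max_eq_left (by linarith : 0 ≤ x + Z ω),
            min_eq_right (by linarith : y + Z ω ≤ y),
            min_eq_right (by linarith : x + Z ω ≤ x),
            if_neg (by push_neg; intro h; linarith), if_pos h2]
          ring
        · rw [max_eq_left (by linarith : 0 ≤ y + Z ω),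
            max_eq_left (by linarith : 0 ≤ x + Z ω),
            min_eq_left (by linarith : y ≤ y + Z ω),
            min_eq_left (by linarith : x ≤ x + Z ω),
            if_neg (by push_neg; intro h; linarith), if_pos h2]
          ring
  rw [← integral_sub hint1 hint2]
  simp_rw [key]
  rw [integral_add hintInd hintS, integral_indicator hSm, setIntegral_const, smul_eq_mul,
    mul_comm]
  rfl
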